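/- Let Σ be a finite alphabet and let M assign to every string-prompt l a probability distribution P_M(·|l) over Σ* (finite support). Define character-level decoding of M as the process that, given prompt l, generates output character by character via marginalization, conditioning/stripping, and refresh (re-querying M with the generated prefix appended when the empty string/end-of-token is sampled). Then for every prompt l and every finite string z, the probability that M's autoregressive token-level generation produces the character sequence z equals the probability that character-level decoding of M produces z. -/

import Mathlib

variable {A : Type*} [DecidableEq A]

/-- Marginal probability that the next character is `c`, under table `d` supported on `T`. -/
noncomputable def margP (T : Finset (List A)) (d : List A → ℝ) (c : A) : ℝ :=
  ∑ t ∈ T.filter (fun t => t.head? = some c), d t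

/-- Prune the table to entries starting with `c` and strip the first character. -/
def stepT (T : Finset (List A)) (c : A) : Finset (List A) :=
  (T.filter (fun t => t.head? = some c)).image List.tail

/-- The renormalized table after conditioning on first character `c` and stripping it. -/
noncomputable def stepD (T : Finset (List A)) (d : List A → ℝ) (c : A) : List A → ℝ :=
  fun s => (∑ t ∈ T.filter (fun t => t.head? = some c ∧ t.tail = s), d t) / margP T d c

/-- Remove the end-of-token entry (the empty string) and renormalize. -/
noncomputable def eotStrip (d : List A → ℝ) : List A → ℝ :=
  fun s => if s = [] then 0 else d s / (1 - d [])

/-- Fuel-indexed token-level generation probability: `strA M n l z` is the probability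
that autoregressive token-level generation from `M` with prompt `l` produces the
character sequence `z` within `n` tokens, i.e. the sum over tokenizations
`(t₁,…,t_k)` of `z` of `∏ᵢ M (l·t₁⋯t_{i-1}) tᵢ`. -/
noncomputable def strA (M : List A → List A → ℝ) : ℕ → List A → List A → ℝ
  | 0, _, z => if z = [] then 1 else 0
  | n + 1, l, z =>
    if z = [] then 1
    else ∑ k ∈ Finset.range z.length,
      M l (z.take (k + 1)) * strA M n (l ++ z.take (k + 1)) (z.drop (k + 1))

/-- Probability that token-level generation from `M` with prompt `l` produces exactly
the character sequence `z` (at a token boundary); `z.length` tokens always suffice. -/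
noncomputable def strProb (M : List A → List A → ℝ) (l z : List A) : ℝ :=
  strA M z.length l z

/-- Fuel-indexed character-level decoding probability. Mode `true`: the table has just
been refreshed from the model (queried at the current prompt-plus-output), so it is the
model's token distribution; mode `false`: mid-token state with table `d` on `T`, where
the empty string entry `d []` is the end-of-token probability. At each step, EOT is
resolved (refreshing the table on EOT), otherwise the next character is sampled from the
marginal and the table is pruned, stripped, and renormalized. `genA … lz T d z` is the
probability of emitting exactly the remaining characters `z` and then reaching a token
boundary (sampling EOT). -/
noncomputable def genA (M : List A → List A → ℝ) (tok : List A → Finset (List A)) :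
    ℕ → Bool → List A → Finset (List A) → (List A → ℝ) → List A → ℝ
  | 0, _, _, _, _, _ => 0
  | _ + 1, true, _, _, _, [] => 1
  | n + 1, true, lz, _, _, c :: z =>
      margP (tok lz) (M lz) c *
        genA M tok n false (lz ++ [c]) (stepT (tok lz) c) (stepD (tok lz) (M lz) c) z
  | _ + 1, false, _, _, d, [] => d []
  | n + 1, false, lz, T, d, c :: z =>
      d [] * genA M tok n true lz T d (c :: z) +
      (1 - d []) * (margP T (eotStrip d) c *
        genA M tok n false (lz ++ [c]) (stepT T c) (stepD T (eotStrip d) c) z)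

/-- Probability that character-level decoding of `M` with prompt `l` produces exactly
the character sequence `z` (ending at a token boundary). -/
noncomputable def charProb (M : List A → List A → ℝ) (tok : List A → Finset (List A))
    (l z : List A) : ℝ :=
  genA M tok (2 * z.length + 2) true l ∅ (fun _ => 0) z

set_option linter.unusedSectionVars false
set_option linter.unusedVariables false

namespace DecEquiv

variable {A : Type*} [DecidableEq A]

lemma genA_true_nil (M : List A → List A → ℝ) (tok : List A → Finset (List A))
    (n : ℕ) (lz : List A) (T : Finset (List A)) (d : List A → ℝ) :
    genA M tok (n+1) true lz T d [] = 1 := by simp [genA]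

lemma genA_true_cons (M : List A → List A → ℝ) (tok : List A → Finset (List A))
    (n : ℕ) (lz : List A) (T : Finset (List A)) (d : List A → ℝ) (c : A) (z : List A) :
    genA M tok (n+1) true lz T d (c::z) = margP (tok lz) (M lz) c *
      genA M tok n false (lz ++ [c]) (stepT (tok lz) c) (stepD (tok lz) (M lz) c) z := by
  simp [genA]

lemma genA_false_nil (M : List A → List A → ℝ) (tok : List A → Finset (List A))
    (n : ℕ) (lz : List A) (T : Finset (List A)) (d : List A → ℝ) :
    genA M tok (n+1) false lz T d [] = d [] := by simp [genA]

lemma genA_false_cons (M : List A → List A → ℝ) (tok : List A → Finset (List A))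
    (n : ℕ) (lz : List A) (T : Finset (List A)) (d : List A → ℝ) (c : A) (z : List A) :
    genA M tok (n+1) false lz T d (c::z) =
      d [] * genA M tok n true lz T d (c :: z) +
      (1 - d []) * (margP T (eotStrip d) c *
        genA M tok n false (lz ++ [c]) (stepT T c) (stepD T (eotStrip d) c) z) := by
  simp [genA]

lemma strA_succ_def (M : List A → List A → ℝ) (n : ℕ) (l z : List A) :
    strA M (n+1) l z = if z = [] then 1
      else ∑ k ∈ Finset.range z.length,
        M l (z.take (k + 1)) * strA M n (l ++ z.take (k + 1)) (z.drop (k + 1)) := by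
  simp [strA]

lemma eq_cons_of_head? {t : List A} {c : A} (h : t.head? = some c) : t = c :: t.tail := by
  cases t with
  | nil => simp at h
  | cons a t' => simp_all

lemma filter_head_tail_eq (T : Finset (List A)) (c : A) (s : List A) :
    T.filter (fun t => t.head? = some c ∧ t.tail = s) = if c :: s ∈ T then {c :: s} else ∅ := by
  ext t
  simp only [Finset.mem_filter]
  constructor
  · rintro ⟨htT, hh, htl⟩
    have ht : t = c :: s := by rw [eq_cons_of_head? hh, htl]
    subst ht
    simp [htT]
  · intro h
    split_ifs at h with hm
    · simp only [Finset.mem_singleton] at h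
      subst h
      exact ⟨hm, rfl, rfl⟩
    · simp at h

lemma sum_filter_head_tail (T : Finset (List A)) (d : List A → ℝ) (c : A) (s : List A)
    (hdsupp : ∀ s ∉ T, d s = 0) :
    ∑ t ∈ T.filter (fun t => t.head? = some c ∧ t.tail = s), d t = d (c :: s) := by
  rw [filter_head_tail_eq]
  split_ifs with h
  · simp
  · simp [hdsupp _ h]

lemma margP_nonneg (T : Finset (List A)) (d : List A → ℝ) (c : A) (hd0 : ∀ s, 0 ≤ d s) :
    0 ≤ margP T d c :=
  Finset.sum_nonneg fun t _ => hd0 t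

lemma d_cons_zero_of_margP_zero {T : Finset (List A)} {d : List A → ℝ} {c : A}
    (hd0 : ∀ s, 0 ≤ d s) (hdsupp : ∀ s ∉ T, d s = 0) (h : margP T d c = 0) (s : List A) :
    d (c :: s) = 0 := by
  by_cases hm : c :: s ∈ T
  · have hmem : c :: s ∈ T.filter (fun t => t.head? = some c) := by
      simp [Finset.mem_filter, hm]
    have hle := Finset.single_le_sum (f := d) (fun t _ => hd0 t) hmem
    simp only [margP] at h
    linarith [hd0 (c :: s)]
  · exact hdsupp _ hm

lemma margP_mul_stepD {T : Finset (List A)} {d : List A → ℝ} (c : A) (s : List A)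
    (hd0 : ∀ s, 0 ≤ d s) (hdsupp : ∀ s ∉ T, d s = 0) :
    margP T d c * stepD T d c s = d (c :: s) := by
  by_cases h : margP T d c = 0
  · simp [h, d_cons_zero_of_margP_zero hd0 hdsupp h s]
  · simp only [stepD, sum_filter_head_tail T d c s hdsupp]
    field_simp

lemma margP_eotStrip (T : Finset (List A)) (d : List A → ℝ) (c : A) :
    margP T (eotStrip d) c = margP T d c / (1 - d []) := by
  simp only [margP, eotStrip]
  rw [Finset.sum_div]
  apply Finset.sum_congr rfl
  intro t ht
  simp only [Finset.mem_filter] at ht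
  have hne : t ≠ [] := by rintro rfl; simp at ht
  simp [hne]

lemma stepD_nonneg {T : Finset (List A)} {d : List A → ℝ} (c : A)
    (hd0 : ∀ s, 0 ≤ d s) (s : List A) : 0 ≤ stepD T d c s :=
  div_nonneg (Finset.sum_nonneg fun t _ => hd0 t) (margP_nonneg T d c hd0)

lemma stepD_supp {T : Finset (List A)} {d : List A → ℝ} (c : A)
    (hdsupp : ∀ s ∉ T, d s = 0) : ∀ s ∉ stepT T c, stepD T d c s = 0 := by
  intro s hs
  have hd : d (c :: s) = 0 := by
    apply hdsupp
    intro hmem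
    exact hs (Finset.mem_image.mpr ⟨c :: s, Finset.mem_filter.mpr ⟨hmem, by simp⟩, rfl⟩)
  simp [stepD, sum_filter_head_tail T d c s hdsupp, hd]

lemma stepD_sum {T : Finset (List A)} {d : List A → ℝ} (c : A)
    (hd0 : ∀ s, 0 ≤ d s) (hdsupp : ∀ s ∉ T, d s = 0) (h : margP T d c ≠ 0) :
    ∑ s ∈ stepT T c, stepD T d c s = 1 := by
  have key : ∑ s ∈ stepT T c, d (c :: s) = margP T d c := by
    rw [stepT, Finset.sum_image (fun x hx y hy hxy => by
      simp only [Finset.mem_coe, Finset.mem_filter] at hx hy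
      rw [eq_cons_of_head? hx.2, eq_cons_of_head? hy.2, hxy])]
    apply Finset.sum_congr rfl
    intro t ht
    simp only [Finset.mem_filter] at ht
    rw [← eq_cons_of_head? ht.2]
  calc ∑ s ∈ stepT T c, stepD T d c s
      = ∑ s ∈ stepT T c, d (c :: s) / margP T d c := by
        apply Finset.sum_congr rfl
        intro s _
        simp [stepD, sum_filter_head_tail T d c s hdsupp]
    _ = 1 := by rw [← Finset.sum_div, key, div_self h]

lemma d_nil_le_one {T : Finset (List A)} {d : List A → ℝ}
    (hd0 : ∀ s, 0 ≤ d s) (hdsupp : ∀ s ∉ T, d s = 0) (hdsum : ∑ s ∈ T, d s = 1) :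
    d [] ≤ 1 := by
  by_cases h : ([] : List A) ∈ T
  · calc d [] ≤ ∑ s ∈ T, d s := Finset.single_le_sum (fun t _ => hd0 t) h
      _ = 1 := hdsum
  · rw [hdsupp _ h]; norm_num

lemma d_eq_zero_of_nil_one {T : Finset (List A)} {d : List A → ℝ}
    (hd0 : ∀ s, 0 ≤ d s) (hdsupp : ∀ s ∉ T, d s = 0) (hdsum : ∑ s ∈ T, d s = 1)
    (h1 : d [] = 1) (s : List A) (hs : s ≠ []) : d s = 0 := by
  by_cases hmem : s ∈ T
  · have hT : ([] : List A) ∈ T := by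
      by_contra h
      rw [hdsupp _ h] at h1
      norm_num at h1
    have hsub : ({[], s} : Finset (List A)) ⊆ T := by
      intro t ht
      simp only [Finset.mem_insert, Finset.mem_singleton] at ht
      rcases ht with rfl | rfl
      exacts [hT, hmem]
    have hle := Finset.sum_le_sum_of_subset_of_nonneg hsub (fun t _ _ => hd0 t)
    rw [Finset.sum_pair (Ne.symm hs), hdsum] at hle
    linarith [hd0 s]
  · exact hdsupp _ hmem

lemma strA_nil (M : List A → List A → ℝ) (n : ℕ) (l : List A) : strA M n l [] = 1 := by
  cases n <;> simp [strA]

lemma strA_succ (M : List A → List A → ℝ) :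
    ∀ n (l z : List A), z.length ≤ n → strA M (n + 1) l z = strA M n l z := by
  intro n
  induction n with
  | zero =>
    intro l z hz
    rw [List.length_eq_zero_iff.mp (Nat.le_zero.mp hz)]
    simp [strA]
  | succ n ih =>
    intro l z hz
    rcases z with _ | ⟨c, z'⟩
    · simp [strA]
    · rw [strA_succ_def, strA_succ_def, if_neg (List.cons_ne_nil c z'),
        if_neg (List.cons_ne_nil c z')]
      apply Finset.sum_congr rfl
      intro k hk
      have hlen : ((c :: z').drop (k + 1)).length ≤ n := by
        simp only [List.length_drop, List.length_cons]
        simp only [List.length_cons] at hz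
        omega
      rw [ih _ _ hlen]

lemma strA_stable (M : List A → List A → ℝ) :
    ∀ n (l z : List A), z.length ≤ n → strA M n l z = strA M z.length l z := by
  intro n
  induction n with
  | zero =>
    intro l z hz
    rw [List.length_eq_zero_iff.mp (Nat.le_zero.mp hz)]
    simp
  | succ n ih =>
    intro l z hz
    rcases Nat.lt_or_ge z.length (n+1) with h | h
    · rw [strA_succ M n l z (by omega), ih l z (by omega)]
    · have hh : z.length = n + 1 := le_antisymm hz h
      rw [hh]

/-- The target value of character-level decoding in mid-token mode. -/
noncomputable def gfun (M : List A → List A → ℝ) (lz : List A) (d : List A → ℝ)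
    (z : List A) : ℝ :=
  ∑ j ∈ Finset.range (z.length + 1),
    d (z.take j) * strA M (z.drop j).length (lz ++ z.take j) (z.drop j)

lemma gfun_nil (M : List A → List A → ℝ) (lz : List A) (d : List A → ℝ) :
    gfun M lz d [] = d [] := by
  simp [gfun, strA]

lemma gfun_cons (M : List A → List A → ℝ) (lz : List A) (d : List A → ℝ) (c : A)
    (z' : List A) :
    gfun M lz d (c :: z') =
      (∑ j ∈ Finset.range (z'.length + 1), d (c :: z'.take j) *
        strA M (z'.drop j).length ((lz ++ [c]) ++ z'.take j) (z'.drop j)) +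
      d [] * strA M (z'.length + 1) lz (c :: z') := by
  simp only [gfun, List.length_cons]
  rw [Finset.sum_range_succ']
  simp only [List.take_succ_cons, List.drop_succ_cons, List.take_zero, List.drop_zero,
    List.append_nil, List.length_cons]
  congr 1
  apply Finset.sum_congr rfl
  intro j hj
  rw [← List.append_cons]

lemma strA_cons (M : List A → List A → ℝ) (l : List A) (c : A) (z' : List A) :
    strA M (z'.length + 1) l (c :: z') =
      ∑ j ∈ Finset.range (z'.length + 1), M l (c :: z'.take j) *
        strA M (z'.drop j).length ((l ++ [c]) ++ z'.take j) (z'.drop j) := by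
  rw [strA_succ_def, if_neg (List.cons_ne_nil c z')]
  simp only [List.length_cons, List.take_succ_cons, List.drop_succ_cons]
  apply Finset.sum_congr rfl
  intro j hj
  rw [← List.append_cons]
  congr 1
  rw [strA_stable M z'.length _ _ (by simp [Nat.sub_le])]

lemma main_lemma (M : List A → List A → ℝ) (tok : List A → Finset (List A))
    (h0 : ∀ l t, 0 ≤ M l t) (hsupp : ∀ l t, t ∉ tok l → M l t = 0) :
    ∀ m : ℕ, ∀ z : List A, z.length ≤ m →
      (∀ n, 2 * z.length + 1 ≤ n → ∀ lz T d,
        genA M tok n true lz T d z = strA M z.length lz z) ∧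
      (∀ n, 2 * z.length + 2 ≤ n → ∀ lz (T : Finset (List A)) (d : List A → ℝ),
        (∀ s, 0 ≤ d s) → (∀ s ∉ T, d s = 0) → (∑ s ∈ T, d s = 1) →
        genA M tok n false lz T d z = gfun M lz d z) := by
  intro m
  induction m with
  | zero =>
    intro z hz
    have hznil : z = [] := List.length_eq_zero_iff.mp (Nat.le_zero.mp hz)
    subst hznil
    constructor
    · intro n hn lz T d
      obtain ⟨k, rfl⟩ : ∃ k, n = k + 1 := ⟨n - 1, by omega⟩
      rw [genA_true_nil, strA_nil]
    · intro n hn lz T d hd0 hdsupp hdsum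
      obtain ⟨k, rfl⟩ : ∃ k, n = k + 1 := ⟨n - 1, by omega⟩
      rw [genA_false_nil, gfun_nil]
  | succ m ih =>
    intro z hz
    have htrue : ∀ n, 2 * z.length + 1 ≤ n → ∀ lz T d,
        genA M tok n true lz T d z = strA M z.length lz z := by
      rcases z with _ | ⟨c, z'⟩
      · intro n hn lz T d
        obtain ⟨k, rfl⟩ : ∃ k, n = k + 1 := ⟨n - 1, by omega⟩
        rw [genA_true_nil, strA_nil]
      · intro n hn lz T d
        simp only [List.length_cons] at hn hz
        obtain ⟨k, rfl⟩ : ∃ k, n = k + 1 := ⟨n - 1, by omega⟩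
        rw [genA_true_cons]
        simp only [List.length_cons]
        rw [strA_cons]
        by_cases hm : margP (tok lz) (M lz) c = 0
        · rw [hm, zero_mul]
          symm
          apply Finset.sum_eq_zero
          intro j hj
          rw [d_cons_zero_of_margP_zero (h0 lz) (hsupp lz) hm, zero_mul]
        · have ihf := (ih z' (by omega)).2
          rw [ihf k (by omega) (lz ++ [c]) (stepT (tok lz) c) (stepD (tok lz) (M lz) c)
            (stepD_nonneg c (h0 lz)) (stepD_supp c (hsupp lz))
            (stepD_sum c (h0 lz) (hsupp lz) hm)]
          simp only [gfun]
          rw [Finset.mul_sum]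
          apply Finset.sum_congr rfl
          intro j hj
          rw [← mul_assoc, margP_mul_stepD c (z'.take j) (h0 lz) (hsupp lz)]
    have hfalse : ∀ n, 2 * z.length + 2 ≤ n → ∀ lz (T : Finset (List A)) (d : List A → ℝ),
        (∀ s, 0 ≤ d s) → (∀ s ∉ T, d s = 0) → (∑ s ∈ T, d s = 1) →
        genA M tok n false lz T d z = gfun M lz d z := by
      rcases z with _ | ⟨c, z'⟩
      · intro n hn lz T d hd0 hdsupp hdsum
        obtain ⟨k, rfl⟩ : ∃ k, n = k + 1 := ⟨n - 1, by omega⟩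
        rw [genA_false_nil, gfun_nil]
      · intro n hn lz T d hd0 hdsupp hdsum
        simp only [List.length_cons] at hn hz
        obtain ⟨k, rfl⟩ : ∃ k, n = k + 1 := ⟨n - 1, by omega⟩
        rw [genA_false_cons]
        rw [htrue k (by simp only [List.length_cons]; omega) lz T d]
        rw [gfun_cons]
        simp only [List.length_cons]
        by_cases h1 : d [] = 1
        · have hz0 : ∀ j, d (c :: z'.take j) = 0 := fun j =>
            d_eq_zero_of_nil_one hd0 hdsupp hdsum h1 _ (List.cons_ne_nil _ _)
          rw [h1, Finset.sum_eq_zero (fun j _ => by rw [hz0, zero_mul])]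
          ring
        · have hle := d_nil_le_one hd0 hdsupp hdsum
          have hne1 : (1:ℝ) - d [] ≠ 0 := by
            intro h
            apply h1
            linarith
          have hpos : 0 < 1 - d [] := lt_of_le_of_ne (by linarith) (Ne.symm hne1)
          by_cases hm : margP T d c = 0
          · have hmz : margP T (eotStrip d) c = 0 := by
              rw [margP_eotStrip, hm, zero_div]
            rw [hmz, zero_mul, mul_zero, add_zero]
            rw [Finset.sum_eq_zero (fun j _ => by
              rw [d_cons_zero_of_margP_zero hd0 hdsupp hm, zero_mul])]
            ring
          · have hd'0 : ∀ s, 0 ≤ eotStrip d s := by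
              intro s
              simp only [eotStrip]
              split_ifs
              · exact le_refl 0
              · exact div_nonneg (hd0 s) (le_of_lt hpos)
            have hd'supp : ∀ s ∉ T, eotStrip d s = 0 := by
              intro s hs
              simp [eotStrip, hdsupp s hs]
            have hm' : margP T (eotStrip d) c ≠ 0 := by
              rw [margP_eotStrip]
              exact div_ne_zero hm hne1
            have ihf := (ih z' (by omega)).2
            rw [ihf k (by omega) (lz ++ [c]) (stepT T c) (stepD T (eotStrip d) c)
              (stepD_nonneg c hd'0) (stepD_supp c hd'supp)
              (stepD_sum c hd'0 hd'supp hm')]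
            simp only [gfun]
            rw [Finset.mul_sum, Finset.mul_sum]
            have hterm : ∀ j, (1 - d []) * (margP T (eotStrip d) c *
                (stepD T (eotStrip d) c (z'.take j) *
                  strA M (z'.drop j).length ((lz ++ [c]) ++ z'.take j) (z'.drop j))) =
                d (c :: z'.take j) *
                  strA M (z'.drop j).length ((lz ++ [c]) ++ z'.take j) (z'.drop j) := by
              intro j
              rw [← mul_assoc (margP T (eotStrip d) c),
                margP_mul_stepD c (z'.take j) hd'0 hd'supp]
              simp only [eotStrip, if_neg (List.cons_ne_nil c (z'.take j))]
              rw [← mul_assoc]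
              congr 1
              rw [mul_comm, div_mul_cancel₀ _ hne1]
            rw [Finset.sum_congr rfl (fun j _ => hterm j)]
            ring
    exact ⟨htrue, hfalse⟩

end DecEquiv

/-- Decoding Equivalence: if `M` assigns to every prompt `l` a PMF over
nonempty tokens with finite support `tok l`, then for every prompt `l` and string `z`,
the probability that token-level generation produces the character sequence `z` equals
the probability that character-level decoding of `M` produces `z`. -/
theorem decoding_equivalence {A : Type*} [DecidableEq A]
    (M : List A → List A → ℝ) (tok : List A → Finset (List A))
    (hne : ∀ l, ∀ t ∈ tok l, t ≠ [])
    (h0 : ∀ l t, 0 ≤ M l t)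
    (hsupp : ∀ l t, t ∉ tok l → M l t = 0)
    (hsum : ∀ l, ∑ t ∈ tok l, M l t = 1) :
    ∀ l z : List A, strProb M l z = charProb M tok l z := by
  intro l z
  have h := (DecEquiv.main_lemma M tok h0 hsupp z.length z le_rfl).1
  simp only [strProb, charProb]
  exact (h (2 * z.length + 2) (by omega) l ∅ (fun _ => 0)).symm
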